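/- Let (a_n) be an arithmetic sequence such that for each m ∈ ℕ, lim_{n→∞} (Σ_{i=0}^{m-1} (b_{n-i} - 1)) / (Σ_{i=1}^n (b_i - 1)) = 0. Then (a_n) is weakly density lifting invariant (weakly dli). -/

import Mathlib

open Filter Topology Set

noncomputable section

/-- The sequence of ratios `b n = a n / a (n-1)` of an arithmetic sequence. -/
def ratios (a : ℕ → ℕ) (n : ℕ) : ℕ := a n / a (n - 1)

/-- An arithmetic sequence: `a 0 = 1`, strictly increasing, each term divides the next. -/
def IsArithSeq (a : ℕ → ℕ) : Prop :=
  a 0 = 1 ∧ (∀ n, a n < a (n + 1)) ∧ (∀ n, a n ∣ a (n + 1))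

/-- The indices `n_k` with `a k = d (n k)`: `n 0 = 1`, `n (k+1) = n k + (b (k+1) - 1)`. -/
def nseq (a : ℕ → ℕ) : ℕ → ℕ
  | 0 => 1
  | k + 1 => nseq a k + (ratios a (k + 1) - 1)

/-- The lifting function `L(A) = ⋃_{k ∈ A} [n_{k-1}, n_k - 1]`. -/
def liftSet (a : ℕ → ℕ) (A : Set ℕ) : Set ℕ :=
  ⋃ k ∈ A, Set.Icc (nseq a (k - 1)) (nseq a k - 1)

/-- `A ⊆ ℕ` has natural density `δ`. -/
def HasDensity (A : Set ℕ) (δ : ℝ) : Prop :=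
  Tendsto (fun n : ℕ => ((A ∩ Set.Iio n).ncard : ℝ) / n) atTop (𝓝 δ)

/-- The upper natural density of `A ⊆ ℕ`. -/
def upperDensity (A : Set ℕ) : ℝ :=
  limsup (fun n : ℕ => ((A ∩ Set.Iio n).ncard : ℝ) / n) atTop

/-- The sequence `(d n)`: the increasing enumeration of `{r * a k : k ≥ 0, 1 ≤ r < b (k+1)}`. -/
def dSeq (a : ℕ → ℕ) : ℕ → ℕ :=
  Nat.nth (fun m => ∃ k r : ℕ, 1 ≤ r ∧ r < ratios a (k + 1) ∧ m = r * a k)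

/-- The characterized subgroup `t_{(u n)}(𝕋)`. -/
def charSub (u : ℕ → ℤ) : Set (AddCircle (1 : ℝ)) :=
  {x | Tendsto (fun n => u n • x) atTop (𝓝 0)}

/-- The statistically characterized subgroup `t^s_{(u n)}(𝕋)`. -/
def statChar (u : ℕ → ℤ) : Set (AddCircle (1 : ℝ)) :=
  {x | ∀ ε : ℝ, 0 < ε → HasDensity {n : ℕ | ε ≤ ‖u n • x‖} 0}

/-- Density lifting invariant. -/
def Dli (a : ℕ → ℕ) : Prop :=
  ∀ A : Set ℕ, A.Infinite → HasDensity A 0 → HasDensity (liftSet a A) 0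

/-- Weakly density lifting invariant. -/
def WeaklyDli (a : ℕ → ℕ) : Prop :=
  ∃ A : Set ℕ, A.Infinite ∧ ∀ m : ℕ, HasDensity (liftSet a ((fun x => x - m) '' A)) 0

/-- Strongly non density lifting invariant. -/
def StronglyNonDli (a : ℕ → ℕ) : Prop :=
  ∀ A : Set ℕ, A.Infinite → 0 < upperDensity (liftSet a A)

variable {a : ℕ → ℕ}

lemma apos (ha : IsArithSeq a) (n : ℕ) : 0 < a n := by
  induction n with
  | zero => simp [ha.1]
  | succ n ih => exact lt_trans ih (ha.2.1 n)

lemma ratios_ge_two (ha : IsArithSeq a) {n : ℕ} (hn : 1 ≤ n) : 2 ≤ ratios a n := by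
  obtain ⟨k, rfl⟩ := Nat.exists_eq_add_of_le hn
  have hdvd := ha.2.2 k
  have hlt := ha.2.1 k
  obtain ⟨c, hc⟩ := hdvd
  have hk := apos ha k
  have hc2 : 2 ≤ c := by nlinarith [apos ha (k+1)]
  have : ratios a (1 + k) = c := by
    have : (1 : ℕ) + k = k + 1 := by omega
    rw [this]
    simp [ratios, hc, Nat.mul_div_cancel_left _ hk]
  omega

lemma nseq_succ (a : ℕ → ℕ) (k : ℕ) :
    nseq a (k + 1) = nseq a k + (ratios a (k + 1) - 1) := rfl

lemma nseq_mono (a : ℕ → ℕ) : Monotone (nseq a) := by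
  apply monotone_nat_of_le_succ
  intro n; rw [nseq_succ]; omega

lemma nseq_ge (ha : IsArithSeq a) (k : ℕ) : k + 1 ≤ nseq a k := by
  induction k with
  | zero => simp [nseq]
  | succ k ih =>
    have := ratios_ge_two ha (n := k + 1) (by omega)
    rw [nseq_succ]; omega

lemma nseq_eq_sum (ha : IsArithSeq a) (n : ℕ) :
    nseq a n = 1 + ∑ i ∈ Finset.Icc 1 n, (ratios a i - 1) := by
  induction n with
  | zero => simp [nseq]
  | succ n ih =>
    rw [nseq_succ, ih]
    rw [show Finset.Icc 1 (n+1) = insert (n+1) (Finset.Icc 1 n) by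
      ext x; simp [Finset.mem_Icc]; omega]
    rw [Finset.sum_insert (by simp)]
    ring

def kaux (a : ℕ → ℕ) : ℕ → ℕ × ℕ
  | 0 => (2, nseq a 2)
  | j + 1 =>
      let p := kaux a j
      let k' := p.1 + j + 3 + 2 ^ (j + 1) * p.2
      (k', p.2 + nseq a k')

def kseq (a : ℕ → ℕ) (j : ℕ) : ℕ := (kaux a j).1

lemma kaux_snd (a : ℕ → ℕ) (j : ℕ) :
    (kaux a j).2 = ∑ i ∈ Finset.range (j + 1), nseq a (kseq a i) := by
  induction j with
  | zero => simp [kaux, kseq]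
  | succ j ih =>
    rw [Finset.sum_range_succ, ← ih]
    rfl

lemma kseq_succ (a : ℕ → ℕ) (j : ℕ) :
    kseq a (j + 1) = kseq a j + j + 3 +
      2 ^ (j + 1) * ∑ i ∈ Finset.range (j + 1), nseq a (kseq a i) := by
  rw [← kaux_snd]
  rfl

lemma kseq_ge (a : ℕ → ℕ) (j : ℕ) : j + 2 ≤ kseq a j := by
  induction j with
  | zero => simp [kseq, kaux]
  | succ j ih => rw [kseq_succ]; omega

lemma kseq_strictMono (a : ℕ → ℕ) : StrictMono (kseq a) := by
  apply strictMono_nat_of_lt_succ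
  intro j; rw [kseq_succ]; omega

lemma kseq_big (a : ℕ → ℕ) {J : ℕ} (hJ : 1 ≤ J) :
    2 ^ J * ∑ i ∈ Finset.range J, nseq a (kseq a i) + J + 1 ≤ kseq a J := by
  obtain ⟨j, rfl⟩ := Nat.exists_eq_add_of_le hJ
  have h := kseq_ge a j
  rw [show 1 + j = j + 1 from by omega, kseq_succ]
  omega

lemma sum_ratios_real (ha : IsArithSeq a) (n : ℕ) :
    ∑ i ∈ Finset.Icc 1 n, ((ratios a i : ℝ) - 1) = (nseq a n : ℝ) - 1 := by
  have h2 : ∀ i ∈ Finset.Icc 1 n, ((ratios a i : ℝ) - 1) = ((ratios a i - 1 : ℕ) : ℝ) := by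
    intro i hi
    have := ratios_ge_two ha (Finset.mem_Icc.mp hi).1
    rw [Nat.cast_sub (by omega)]
    norm_num
  rw [Finset.sum_congr rfl h2, ← Nat.cast_sum]
  have := nseq_eq_sum ha n
  have hcast : (nseq a n : ℝ) = ((1 + ∑ i ∈ Finset.Icc 1 n, (ratios a i - 1) : ℕ) : ℝ) := by
    exact_mod_cast congrArg (fun x : ℕ => (x : ℝ)) this
  rw [hcast]
  push_cast
  ring

set_option maxHeartbeats 1000000 in
/-- if for each `m ≥ 1`, `(Σ_{i=0}^{m-1} (b_{n-i} - 1)) / (Σ_{i=1}^n (b_i - 1)) → 0`,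
then `(a n)` is weakly dli. -/
theorem weaklyDli_of_block_ratio_limit (a : ℕ → ℕ) (ha : IsArithSeq a)
    (h : ∀ m : ℕ, 1 ≤ m →
      Tendsto
        (fun n : ℕ =>
          (∑ i ∈ Finset.range m, ((ratios a (n - i) : ℝ) - 1)) /
            ∑ i ∈ Finset.Icc 1 n, ((ratios a i : ℝ) - 1))
        atTop (𝓝 0)) :
    WeaklyDli a := by
  classical
  set k : ℕ → ℕ := kseq a with hkdef
  refine ⟨Set.range k, Set.infinite_range_of_injective (kseq_strictMono a).injective, ?_⟩
  intro m
  rw [HasDensity]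
  rw [NormedAddCommGroup.tendsto_nhds_zero]
  intro ε hε
  set ε' : ℝ := min (ε / 4) 4⁻¹ with hε'def
  have hε'pos : 0 < ε' := lt_min (by linarith) (by norm_num)
  have hε'le : ε' ≤ 4⁻¹ := min_le_right _ _
  have h3ε' : 3 * ε' < ε := by
    have : ε' ≤ ε / 4 := min_le_left _ _
    linarith
  -- step 1 : single-block ratio tendsto
  have h1' : Tendsto (fun q : ℕ => ((ratios a q : ℝ) - 1) / ((nseq a q : ℝ) - 1))
      atTop (𝓝 0) := by
    refine (h 1 le_rfl).congr ?_
    intro n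
    rw [Finset.sum_range_one, Nat.sub_zero, sum_ratios_real ha]
  obtain ⟨Q0, hQ0⟩ := eventually_atTop.mp (h1'.eventually (gt_mem_nhds hε'pos))
  set Q : ℕ := Q0 + 1 with hQdef
  have hQbound : ∀ q, Q ≤ q → ((ratios a q : ℝ) - 1) ≤ ε' * ((nseq a q : ℝ) - 1) := by
    intro q hq
    have hq1 : 2 ≤ nseq a q := by have := nseq_ge ha q; omega
    have hden : (0 : ℝ) < (nseq a q : ℝ) - 1 := by
      have : (2 : ℝ) ≤ (nseq a q : ℝ) := by exact_mod_cast hq1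
      linarith
    have := hQ0 q (by omega)
    rw [div_lt_iff₀ hden] at this
    linarith
  -- step 2 : choose j1
  obtain ⟨M, hM⟩ := exists_nat_gt (1 / ε')
  set j1 : ℕ := M + Q + m + 1 with hj1def
  have hmj1 : m + 1 ≤ j1 := by omega
  have hj1pos : 1 ≤ j1 := by omega
  have h2j1 : 1 / ε' < (2 : ℝ) ^ j1 := by
    have h1 : (M : ℝ) ≤ (j1 : ℝ) := by exact_mod_cast (by omega : M ≤ j1)
    have h2 : (j1 : ℝ) < (2 : ℝ) ^ j1 := by
      exact_mod_cast Nat.lt_two_pow_self (n := j1)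
    linarith
  set N : ℕ := nseq a (k j1 - m - 1) + 2 with hNdef
  rw [eventually_atTop]
  refine ⟨N, ?_⟩
  intro n hn
  have hkj1 : j1 + 2 ≤ k j1 := kseq_ge a j1
  have hnsj1 : k j1 - m - 1 + 1 ≤ nseq a (k j1 - m - 1) := nseq_ge ha _
  -- the greatest relevant block index
  set P : ℕ → Prop := fun j => nseq a (k j - m - 1) < n with hPdef
  set J : ℕ := Nat.findGreatest P (n + m) with hJdef
  have hPj1 : P j1 := by simp only [hPdef]; omega
  have hj1nm : j1 ≤ n + m := by omega
  have hJge : j1 ≤ J := Nat.le_findGreatest hj1nm hPj1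
  have hJP : P J := by
    have := Nat.findGreatest_spec hj1nm hPj1
    exact this
  have hJmax : ∀ j, P j → j ≤ J := by
    intro j hj
    by_contra hcon
    push_neg at hcon
    rcases le_or_gt j (n + m) with hle | hlt
    · exact Nat.findGreatest_is_greatest hcon hle hj
    · have h1 : j + 2 ≤ k j := kseq_ge a j
      have h2 : k j - m - 1 + 1 ≤ nseq a (k j - m - 1) := nseq_ge ha _
      simp only [hPdef] at hj
      omega
  have hJP' : nseq a (k J - m - 1) < n := hJP
  -- covering finset
  set Cov : Finset ℕ := (Finset.range (J + 1)).biUnion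
    (fun j => Finset.Icc (nseq a (k j - m - 1)) (min (nseq a (k j - m) - 1) (n - 1)))
    with hCov
  have hsub : liftSet a ((fun x => x - m) '' Set.range k) ∩ Set.Iio n ⊆ ↑Cov := by
    rintro x ⟨hxL, hxn⟩
    rw [liftSet] at hxL
    obtain ⟨c, hcA, hx⟩ := Set.mem_iUnion₂.mp hxL
    obtain ⟨y, hy, rfl⟩ := hcA
    obtain ⟨j, rfl⟩ := hy
    simp only [Set.mem_Icc] at hx
    have hxn' : x < n := hxn
    have hjJ : j ≤ J := hJmax j (lt_of_le_of_lt hx.1 hxn')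
    simp only [hCov, Finset.coe_biUnion, Set.mem_iUnion, Finset.mem_coe, Finset.mem_range]
    exact ⟨j, Nat.lt_succ_of_le hjJ, Finset.mem_Icc.mpr ⟨hx.1, le_min hx.2 (by omega)⟩⟩
  have hcard1 : (liftSet a ((fun x => x - m) '' Set.range k) ∩ Set.Iio n).ncard ≤ Cov.card := by
    rw [← Set.ncard_coe_finset]
    exact Set.ncard_le_ncard hsub (Finset.finite_toSet _)
  have hcard2 : Cov.card ≤
      ∑ j ∈ Finset.range (J + 1), (nseq a (k j - m) - nseq a (k j - m - 1)) := by
    refine (Finset.card_biUnion_le).trans (Finset.sum_le_sum ?_)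
    intro j _
    rw [Nat.card_Icc]
    have h1 : nseq a (k j - m - 1) ≤ nseq a (k j - m) := nseq_mono a (by omega)
    have h2 : 1 ≤ nseq a (k j - m) := by have := nseq_ge ha (k j - m); omega
    have h3 := min_le_left (nseq a (k j - m) - 1) (n - 1)
    omega
  -- bound for earlier blocks, in ℕ
  have hA : 2 ^ J * ∑ j ∈ Finset.range J, (nseq a (k j - m) - nseq a (k j - m - 1)) < n := by
    have hstep1 : ∑ j ∈ Finset.range J, (nseq a (k j - m) - nseq a (k j - m - 1))
        ≤ ∑ j ∈ Finset.range J, nseq a (k j) := by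
      refine Finset.sum_le_sum ?_
      intro j _
      have h1 : nseq a (k j - m) ≤ nseq a (k j) := nseq_mono a (by omega)
      omega
    have hbig : 2 ^ J * ∑ i ∈ Finset.range J, nseq a (k i) + J + 1 ≤ k J :=
      kseq_big a (hj1pos.trans hJge)
    have h1 : m + 1 ≤ J := le_trans hmj1 hJge
    have h2 : nseq a (k J - m - 1) ≥ k J - m - 1 + 1 := nseq_ge ha _
    have h4 : J + 2 ≤ k J := kseq_ge a J
    have h3 : 2 ^ J * ∑ j ∈ Finset.range J, (nseq a (k j - m) - nseq a (k j - m - 1))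
        ≤ 2 ^ J * ∑ j ∈ Finset.range J, nseq a (k j) :=
      Nat.mul_le_mul_left _ hstep1
    omega
  -- bound for the last block, in ℝ
  have hkJm : Q ≤ k J - m ∧ 1 ≤ k J - m := by
    have h1 : k j1 ≤ k J := (kseq_strictMono a).monotone hJge
    omega
  have hrec : nseq a (k J - m) = nseq a (k J - m - 1) + (ratios a (k J - m) - 1) := by
    have hq1 : 1 ≤ k J - m := hkJm.2
    conv_lhs => rw [show k J - m = (k J - m - 1) + 1 from by omega]
    rw [nseq_succ, show (k J - m - 1) + 1 = k J - m from by omega]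
  have hb2 : 2 ≤ ratios a (k J - m) := ratios_ge_two ha hkJm.2
  have hB : ((ratios a (k J - m) : ℝ) - 1) ≤ 2 * ε' * n := by
    have hQb := hQbound (k J - m) hkJm.1
    have hcast : ((nseq a (k J - m) : ℝ) - 1)
        = ((nseq a (k J - m - 1) : ℝ) - 1) + ((ratios a (k J - m) : ℝ) - 1) := by
      rw [hrec]
      have : ((nseq a (k J - m - 1) + (ratios a (k J - m) - 1) : ℕ) : ℝ)
          = (nseq a (k J - m - 1) : ℝ) + ((ratios a (k J - m) : ℝ) - 1) := by
        push_cast [Nat.cast_sub (by omega : 1 ≤ ratios a (k J - m))]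
        ring
      rw [this]; ring
    rw [hcast] at hQb
    have hlt : ((nseq a (k J - m - 1) : ℝ)) ≤ (n : ℝ) := by
      exact_mod_cast le_of_lt hJP'
    have hbr : (2 : ℝ) ≤ (ratios a (k J - m) : ℝ) := by exact_mod_cast hb2
    have hnn : (0 : ℝ) ≤ (n : ℝ) := Nat.cast_nonneg n
    nlinarith [mul_nonneg (by linarith : (0:ℝ) ≤ 4⁻¹ - ε')
        (by linarith : (0:ℝ) ≤ (ratios a (k J - m) : ℝ) - 1),
      mul_nonneg hε'pos.le
        (by linarith : (0:ℝ) ≤ (n : ℝ) - ((nseq a (k J - m - 1) : ℝ) - 1)),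
      mul_nonneg hε'pos.le hnn]
  -- assemble
  have hn2 : 2 ≤ n := by omega
  have hnpos : (0 : ℝ) < (n : ℝ) := by exact_mod_cast (by omega : 0 < n)
  have hBszJ : nseq a (k J - m) - nseq a (k J - m - 1) = ratios a (k J - m) - 1 := by
    omega
  have hCn : (liftSet a ((fun x => x - m) '' Set.range k) ∩ Set.Iio n).ncard ≤
      ∑ j ∈ Finset.range J, (nseq a (k j - m) - nseq a (k j - m - 1))
        + (ratios a (k J - m) - 1) := by
    have := Finset.sum_range_succ
      (fun j => nseq a (k j - m) - nseq a (k j - m - 1)) J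
    omega
  have hC : ((liftSet a ((fun x => x - m) '' Set.range k) ∩ Set.Iio n).ncard : ℝ) ≤
      ((∑ j ∈ Finset.range J, (nseq a (k j - m) - nseq a (k j - m - 1)) : ℕ) : ℝ)
        + ((ratios a (k J - m) : ℝ) - 1) := by
    have hcast : ((∑ j ∈ Finset.range J, (nseq a (k j - m) - nseq a (k j - m - 1))
        + (ratios a (k J - m) - 1) : ℕ) : ℝ)
        = ((∑ j ∈ Finset.range J, (nseq a (k j - m) - nseq a (k j - m - 1)) : ℕ) : ℝ)
          + ((ratios a (k J - m) : ℝ) - 1) := by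
      push_cast [Nat.cast_sub (by omega : 1 ≤ ratios a (k J - m))]
      ring
    rw [← hcast]
    exact_mod_cast hCn
  have h2Jpos : (0 : ℝ) < 2 ^ J := by positivity
  have hpow : (1 : ℝ) / ε' < 2 ^ J := by
    refine lt_of_lt_of_le h2j1 ?_
    exact pow_le_pow_right₀ one_le_two hJge
  have h1ε2J : 1 < ε' * 2 ^ J := by
    rw [div_lt_iff₀ hε'pos] at hpow
    linarith
  have hnn : (0 : ℝ) ≤ (n : ℝ) := Nat.cast_nonneg n
  have hAcast : (2 : ℝ) ^ J *
      ((∑ j ∈ Finset.range J, (nseq a (k j - m) - nseq a (k j - m - 1)) : ℕ) : ℝ) ≤ n := by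
    exact_mod_cast le_of_lt hA
  have hS1 : ((∑ j ∈ Finset.range J, (nseq a (k j - m) - nseq a (k j - m - 1)) : ℕ) : ℝ)
      ≤ ε' * n := by
    have key : ((∑ j ∈ Finset.range J, (nseq a (k j - m) - nseq a (k j - m - 1)) : ℕ) : ℝ)
        * 2 ^ J ≤ (ε' * n) * 2 ^ J := by
      have h1 : (n : ℝ) ≤ ε' * n * 2 ^ J := by nlinarith
      linarith [hAcast]
    exact le_of_mul_le_mul_right key h2Jpos
  have hfinal : ((liftSet a ((fun x => x - m) '' Set.range k) ∩ Set.Iio n).ncard : ℝ)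
      ≤ 3 * ε' * n := by linarith
  rw [Real.norm_eq_abs, abs_of_nonneg (by positivity), div_lt_iff₀ hnpos]
  have := mul_lt_mul_of_pos_right h3ε' hnpos
  linarith
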